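/- Let R = (Σ, I, T) be a regular transition system where I has n_I states and T has n_T states. Then there exists an NFA over Σ whose state type has cardinality at most (n_T + 1)^(n_T) · 2^(n_T) · 2^(n_T) · 2 · n_I and which recognizes exactly the language Ind_1(R). -/

import Mathlib

/-- A regular transition system: an NFA `I` over `Σ` for the initial
configurations and a transducer (an NFA over `Σ × Σ`) `T` for the transitions. -/
structure RTS (Sig QI QT : Type) where
  I : NFA Sig QI
  T : NFA (Sig × Sig) QT

/-- `w ⇝ u`: the equal-length pair `(w,u)`, identified with the zipped word over
`Σ × Σ`, is accepted by the transducer. -/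
def RTS.Step {Sig QI QT : Type} (R : RTS Sig QI QT) (w u : List Sig) : Prop :=
  w.length = u.length ∧ w.zip u ∈ R.T.accepts

/-- `Reach(R)`: configurations reachable from some initial configuration under the
reflexive-transitive closure of `⇝`. -/
def RTS.Reach {Sig QI QT : Type} (R : RTS Sig QI QT) : Set (List Sig) :=
  { w | ∃ u ∈ R.I.accepts, Relation.ReflTransGen R.Step u w }

/-- A `1`-formula (of length `φ.length`) is a word over the alphabet of subsets
of `Σ`. -/
abbrev OneFormula (Sig : Type) := List (Set Sig)

/-- `w` satisfies `φ` iff `|w| ≠ |φ|`, or `|w| = |φ|` and there is a position `j`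
with `w[j] ∈ φ[j]`. -/
def Sat1 {Sig : Type} (w : List Sig) (φ : OneFormula Sig) : Prop :=
  w.length ≠ φ.length ∨
    ∃ (j : ℕ) (h₁ : j < w.length) (h₂ : j < φ.length),
      w.get ⟨j, h₁⟩ ∈ φ.get ⟨j, h₂⟩

/-- A set of configurations is inductive if it is closed under `⇝`. -/
def IsInductiveSet {Sig QI QT : Type} (R : RTS Sig QI QT) (S : Set (List Sig)) : Prop :=
  ∀ w ∈ S, ∀ u, R.Step w u → u ∈ S

/-- A set `S` is `1`-bounded (a `1`-set) if for every length `ℓ` there is a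
`1`-formula of length `ℓ` whose satisfying words of length `ℓ` are exactly
`S ∩ Σ^ℓ`. -/
def Is1Bounded {Sig : Type} (S : Set (List Sig)) : Prop :=
  ∀ ℓ : ℕ, ∃ φ : OneFormula Sig, φ.length = ℓ ∧
    ∀ w : List Sig, w.length = ℓ → (w ∈ S ↔ Sat1 w φ)

/-- A `1`-formula is inductive if the set of words satisfying it is inductive. -/
def IsInductive1Formula {Sig QI QT : Type} (R : RTS Sig QI QT)
    (φ : OneFormula Sig) : Prop :=
  ∀ w u, Sat1 w φ → R.Step w u → Sat1 u φ

/-- `u ⇝_1 w`: every inductive `1`-formula satisfied by `u` is satisfied by `w`. -/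
def PotReach1 {Sig QI QT : Type} (R : RTS Sig QI QT) (u w : List Sig) : Prop :=
  ∀ φ : OneFormula Sig, IsInductive1Formula R φ → Sat1 u φ → Sat1 w φ

/-- `Ind_1(R) = { w : u ⇝_1 w for some initial u }`. -/
def Ind1 {Sig QI QT : Type} (R : RTS Sig QI QT) : Set (List Sig) :=
  { w | ∃ u ∈ R.I.accepts, PotReach1 R u w }

/-- The separator `Separator(w)`: the union of all inductive `1`-sets not containing `w`. -/
def Separator {Sig QI QT : Type} (R : RTS Sig QI QT) (w : List Sig) : Set (List Sig) :=
  { z | ∃ S : Set (List Sig), IsInductiveSet R S ∧ Is1Bounded S ∧ w ∉ S ∧ z ∈ S }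

namespace Ind1NFA

open Set

variable {Sig QI QT : Type}

/-! ### Generic NFA helper lemmas -/

theorem evalFrom_append {α σ : Type*} (M : NFA α σ) (S : Set σ) (x y : List α) :
    M.evalFrom S (x ++ y) = M.evalFrom (M.evalFrom S x) y := by
  simp [NFA.evalFrom, List.foldl_append]

theorem evalFrom_mono {α σ : Type*} (M : NFA α σ) {S S' : Set σ} (h : S ⊆ S')
    (x : List α) : M.evalFrom S x ⊆ M.evalFrom S' x := by
  induction x generalizing S S' with
  | nil => simpa using h
  | cons a x ih =>
    show M.evalFrom (M.stepSet S a) x ⊆ M.evalFrom (M.stepSet S' a) x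
    refine ih ?_
    intro q hq
    rw [NFA.mem_stepSet] at hq ⊢
    obtain ⟨t, ht, hq⟩ := hq
    exact ⟨t, h ht, hq⟩

theorem mem_evalFrom_exists {α σ : Type*} (M : NFA α σ) {S : Set σ} {x : List α} {q : σ} :
    q ∈ M.evalFrom S x ↔ ∃ s ∈ S, q ∈ M.evalFrom {s} x := by
  induction x generalizing S with
  | nil => simp
  | cons a x ih =>
    show q ∈ M.evalFrom (M.stepSet S a) x ↔ _
    constructor
    · intro hq
      obtain ⟨t, ht, hq⟩ := (ih (S := M.stepSet S a)).mp hq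
      rw [NFA.mem_stepSet] at ht
      obtain ⟨s, hs, ht⟩ := ht
      refine ⟨s, hs, ?_⟩
      show q ∈ M.evalFrom (M.stepSet {s} a) x
      have h1 : {t} ⊆ M.stepSet {s} a := by
        intro z hz; cases hz; rw [NFA.mem_stepSet]; exact ⟨s, rfl, ht⟩
      exact evalFrom_mono M h1 x hq
    · rintro ⟨s, hs, hq⟩
      have hq' : q ∈ M.evalFrom (M.stepSet {s} a) x := hq
      have h1 : M.stepSet {s} a ⊆ M.stepSet S a := by
        intro t ht
        rw [NFA.mem_stepSet] at ht ⊢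
        obtain ⟨s', hs', ht⟩ := ht
        cases hs'
        exact ⟨s, hs, ht⟩
      exact evalFrom_mono M h1 x hq'

/-- Extract a run (as a function of positions) from `evalFrom` membership. -/
theorem exists_run {α σ : Type*} (M : NFA α σ) :
    ∀ (x : List α) (S : Set σ) (q : σ), q ∈ M.evalFrom S x →
    ∃ f : ℕ → σ, f 0 ∈ S ∧ f x.length = q ∧
      ∀ c a, x[c]? = some a → f (c + 1) ∈ M.step (f c) a := by
  intro x
  induction x with
  | nil =>
    intro S q hq
    exact ⟨fun _ => q, hq, rfl, by intro c a h; simp at h⟩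
  | cons a x ih =>
    intro S q hq
    have hq' : q ∈ M.evalFrom (M.stepSet S a) x := hq
    obtain ⟨f, hf0, hflen, hfstep⟩ := ih _ q hq'
    rw [NFA.mem_stepSet] at hf0
    obtain ⟨s, hs, hf0⟩ := hf0
    refine ⟨fun n => if n = 0 then s else f (n - 1), by simp [hs], by simp [hflen], ?_⟩
    intro c b hc
    cases c with
    | zero =>
      simp only [List.getElem?_cons_zero, Option.some.injEq] at hc
      subst hc
      simpa using hf0
    | succ c =>
      simp only [List.getElem?_cons_succ] at hc
      simpa using hfstep c b hc
/-! ### Round-indexed saturation -/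

variable (R : RTS Sig QI QT)

/-- `Psi R w s j` : the set of letters derivable at position `j` of `w` within `s` rounds. -/
def Psi (w : List Sig) : ℕ → ℕ → Set Sig
  | 0, j => {a | w[j]? = some a}
  | s + 1, j =>
    Psi w s j ∪
      {a | ∃ p : List (Sig × Sig), p.length = w.length ∧ p ∈ R.T.accepts ∧
        (∀ m x y, p[m]? = some (x, y) → y ∈ Psi w s m) ∧ ∃ y, p[j]? = some (a, y)}

/-- A pair word is valid at round `s` with offset `off`:
all its consumed (second) letters are already derived. -/
def PValid (w : List Sig) (s off : ℕ) (p : List (Sig × Sig)) : Prop :=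
  ∀ m x y, p[m]? = some (x, y) → y ∈ Psi R w s (off + m)

/-- All letters ever derivable at position `j`. -/
def Zset (w : List Sig) (j : ℕ) : Set Sig := {a | ∃ s, a ∈ Psi R w s j}

theorem Psi_succ (w : List Sig) (s j : ℕ) :
    Psi R w (s + 1) j =
      Psi R w s j ∪
        {a | ∃ p : List (Sig × Sig), p.length = w.length ∧ p ∈ R.T.accepts ∧
          PValid R w s 0 p ∧ ∃ y, p[j]? = some (a, y)} := by
  have hdef : Psi R w (s + 1) j =
      Psi R w s j ∪
        {a | ∃ p : List (Sig × Sig), p.length = w.length ∧ p ∈ R.T.accepts ∧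
          (∀ m x y, p[m]? = some (x, y) → y ∈ Psi R w s m) ∧ ∃ y, p[j]? = some (a, y)} := rfl
  rw [hdef]
  congr 1
  ext a
  simp only [mem_setOf_eq, PValid, Nat.zero_add]

theorem Psi_mono (w : List Sig) {s t : ℕ} (h : s ≤ t) (j : ℕ) :
    Psi R w s j ⊆ Psi R w t j := by
  induction t with
  | zero =>
    have : s = 0 := Nat.le_zero.mp h
    subst this; exact subset_rfl
  | succ t ih =>
    rcases Nat.lt_or_ge s (t + 1) with h' | h'
    · exact (ih (Nat.lt_succ_iff.mp h')).trans (subset_union_left)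
    · have : s = t + 1 := le_antisymm h h'
      subst this; exact subset_rfl

theorem PValid_mono (w : List Sig) {s t off : ℕ} (h : s ≤ t) {p : List (Sig × Sig)}
    (hp : PValid R w s off p) : PValid R w t off p :=
  fun m x y hm => Psi_mono R w h _ (hp m x y hm)

theorem base_mem_Psi (w : List Sig) {j : ℕ} {a : Sig} (h : w[j]? = some a) (s : ℕ) :
    a ∈ Psi R w s j :=
  Psi_mono R w (Nat.zero_le s) j h

/-- Prefix reach set at round `s`, cut `c`. -/
def Fset (w : List Sig) (s c : ℕ) : Set QT :=
  {q | ∃ p : List (Sig × Sig), p.length = c ∧ PValid R w s 0 p ∧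
    q ∈ R.T.evalFrom R.T.start p}

/-- Suffix completion set at round `s`, cut `c`. -/
def Bset (w : List Sig) (s c : ℕ) : Set QT :=
  {q | ∃ p : List (Sig × Sig), c + p.length = w.length ∧ PValid R w s c p ∧
    (R.T.evalFrom {q} p ∩ R.T.accept).Nonempty}

/-- Usable states at round `s`, cut `c`. -/
def Uset (w : List Sig) (s c : ℕ) : Set QT := Fset R w s c ∩ Bset R w s c

theorem Fset_mono (w : List Sig) {s t : ℕ} (h : s ≤ t) (c : ℕ) :
    Fset R w s c ⊆ Fset R w t c := by
  rintro q ⟨p, h1, h2, h3⟩; exact ⟨p, h1, PValid_mono R w h h2, h3⟩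

theorem Bset_mono (w : List Sig) {s t : ℕ} (h : s ≤ t) (c : ℕ) :
    Bset R w s c ⊆ Bset R w t c := by
  rintro q ⟨p, h1, h2, h3⟩; exact ⟨p, h1, PValid_mono R w h h2, h3⟩

theorem Uset_mono (w : List Sig) {s t : ℕ} (h : s ≤ t) (c : ℕ) :
    Uset R w s c ⊆ Uset R w t c :=
  fun _ hq => ⟨Fset_mono R w h c hq.1, Bset_mono R w h c hq.2⟩

theorem Fset_zero_subset (w : List Sig) (s : ℕ) : Fset R w s 0 ⊆ R.T.start := by
  rintro q ⟨p, h1, _, h3⟩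
  rw [List.length_eq_zero_iff] at h1
  subst h1
  simpa using h3

theorem Bset_final_subset (w : List Sig) (s : ℕ) : Bset R w s w.length ⊆ R.T.accept := by
  rintro q ⟨p, h1, _, h3⟩
  have : p.length = 0 := by omega
  rw [List.length_eq_zero_iff] at this
  subst this
  obtain ⟨x, hx1, hx2⟩ := h3
  simp only [NFA.evalFrom_nil, mem_singleton_iff] at hx1
  subst hx1; exact hx2

theorem mem_Fset_start (w : List Sig) (s : ℕ) {q : QT} (h : q ∈ R.T.start) :
    q ∈ Fset R w s 0 :=
  ⟨[], rfl, by intro m x y hm; simp at hm, by simpa using h⟩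

theorem mem_Bset_accept (w : List Sig) (s : ℕ) {q : QT} (h : q ∈ R.T.accept) :
    q ∈ Bset R w s w.length :=
  ⟨[], by simp, by intro m x y hm; simp at hm, ⟨q, by simp, h⟩⟩

/-- Extend a prefix-run one step to the right. -/
theorem Fset_extend (w : List Sig) {s c : ℕ} {q q' : QT} {a b : Sig}
    (hq : q ∈ Fset R w s c) (hb : b ∈ Psi R w s c) (hstep : q' ∈ R.T.step q (a, b)) :
    q' ∈ Fset R w s (c + 1) := by
  obtain ⟨p, h1, h2, h3⟩ := hq
  refine ⟨p ++ [(a, b)], by simp [h1], ?_, ?_⟩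
  · intro m x y hm
    have hmlt : m < p.length + 1 := by
      have := List.getElem?_eq_some_iff.mp hm
      simpa using this.1
    rcases Nat.lt_or_ge m p.length with h | h
    · rw [List.getElem?_append_left h] at hm
      exact h2 m x y hm
    · have : m = p.length := by omega
      subst this
      rw [List.getElem?_concat_length] at hm
      simp only [Option.some.injEq, Prod.mk.injEq] at hm
      rw [h1, Nat.zero_add]
      rw [← hm.2, ← h1]
      simpa [h1] using hb
  · rw [evalFrom_append]
    rw [mem_evalFrom_exists]
    refine ⟨q, h3, ?_⟩
    simp only [NFA.evalFrom_singleton, NFA.mem_stepSet]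
    exact ⟨q, rfl, hstep⟩

/-- Extend a suffix-run one step to the left. -/
theorem Bset_extend (w : List Sig) {s c : ℕ} {q q' : QT} {a b : Sig}
    (hq' : q' ∈ Bset R w s (c + 1)) (hb : b ∈ Psi R w s c) (hstep : q' ∈ R.T.step q (a, b)) :
    q ∈ Bset R w s c := by
  obtain ⟨p, h1, h2, h3⟩ := hq'
  refine ⟨(a, b) :: p, by simp only [List.length_cons]; omega, ?_, ?_⟩
  · intro m x y hm
    cases m with
    | zero =>
      simp only [List.getElem?_cons_zero, Option.some.injEq, Prod.mk.injEq] at hm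
      simpa [← hm.2] using hb
    | succ m =>
      simp only [List.getElem?_cons_succ] at hm
      have := h2 m x y hm
      simpa [Nat.add_comm, Nat.add_assoc, Nat.add_left_comm] using this
  · obtain ⟨x, hx1, hx2⟩ := h3
    refine ⟨x, ?_, hx2⟩
    show x ∈ R.T.evalFrom (R.T.stepSet {q} (a, b)) p
    refine evalFrom_mono R.T ?_ p hx1
    intro z hz; cases hz
    rw [NFA.mem_stepSet]; exact ⟨q, rfl, hstep⟩

/-- Peel the last step off a prefix-run. -/
theorem Fset_peel (w : List Sig) {s c : ℕ} {q' : QT} (hq' : q' ∈ Fset R w s (c + 1)) :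
    ∃ (a b : Sig) (q : QT), q ∈ Fset R w s c ∧ b ∈ Psi R w s c ∧ q' ∈ R.T.step q (a, b) := by
  obtain ⟨p, h1, h2, h3⟩ := hq'
  have hne : p ≠ [] := by intro h; rw [h] at h1; simp at h1
  obtain ⟨p', l, rfl⟩ := (List.eq_nil_or_concat p).resolve_left hne
  rw [List.concat_eq_append] at *
  obtain ⟨a, b⟩ := l
  have hlen : p'.length = c := by simpa using h1
  rw [evalFrom_append, mem_evalFrom_exists] at h3
  obtain ⟨q, hq, h3⟩ := h3
  simp only [NFA.evalFrom_singleton, NFA.mem_stepSet, mem_singleton_iff] at h3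
  obtain ⟨t, ht, h3⟩ := h3
  cases ht
  have hb : b ∈ Psi R w s c := by
    have := h2 p'.length a b (List.getElem?_concat_length (l := p') (a := (a, b)))
    simpa [hlen] using this
  refine ⟨a, b, q, ⟨p', hlen, ?_, hq⟩, hb, h3⟩
  intro m x y hm
  have hmlt : m < p'.length := by
    have := List.getElem?_eq_some_iff.mp hm
    exact this.1
  refine h2 m x y ?_
  rw [List.getElem?_append_left hmlt]
  exact hm

/-- Peel the first step off a suffix-run. -/
theorem Bset_peel (w : List Sig) {s c : ℕ} {q : QT} (hq : q ∈ Bset R w s c)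
    (hc : c < w.length) :
    ∃ (a b : Sig) (q' : QT), b ∈ Psi R w s c ∧ q' ∈ R.T.step q (a, b) ∧
      q' ∈ Bset R w s (c + 1) := by
  obtain ⟨p, h1, h2, h3⟩ := hq
  have hne : p ≠ [] := by intro h; rw [h] at h1; simp at h1; omega
  obtain ⟨⟨a, b⟩, p', rfl⟩ := List.exists_cons_of_ne_nil hne
  obtain ⟨x, hx1, hx2⟩ := h3
  have hx1' : x ∈ R.T.evalFrom (R.T.stepSet {q} (a, b)) p' := hx1
  rw [mem_evalFrom_exists] at hx1'
  obtain ⟨q', hq', hx1'⟩ := hx1'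
  simp only [NFA.mem_stepSet, mem_singleton_iff] at hq'
  obtain ⟨t, ht, hq'⟩ := hq'
  cases ht
  have hb : b ∈ Psi R w s c := by
    have := h2 0 a b (by simp)
    simpa using this
  refine ⟨a, b, q', hb, hq', p', by simp only [List.length_cons] at h1; omega, ?_, ⟨x, hx1', hx2⟩⟩
  intro m x y hm
  have := h2 (m + 1) x y (by simpa using hm)
  simpa [Nat.add_comm, Nat.add_assoc, Nat.add_left_comm] using this

/-! ### Productions and anchors -/

/-- Split a production run at the production position: anchor states. -/
theorem psi_production (w : List Sig) {s j : ℕ} {b : Sig} (h : b ∈ Psi R w (s + 1) j) :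
    b ∈ Psi R w s j ∨
      ∃ (y : Sig) (q q' : QT), q ∈ Uset R w s j ∧ q' ∈ Uset R w s (j + 1) ∧
        q' ∈ R.T.step q (b, y) ∧ y ∈ Psi R w s j := by
  rw [Psi_succ] at h
  rcases h with h | h
  · exact Or.inl h
  obtain ⟨p, hlen, hacc, hvalid, y, hj⟩ := h
  right
  have hjlt : j < p.length := (List.getElem?_eq_some_iff.mp hj).1
  have hsplit : p = p.take j ++ (b, y) :: p.drop (j + 1) := by
    conv_lhs => rw [← List.take_append_drop j p]
    congr 1
    rw [List.drop_eq_getElem_cons hjlt]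
    congr 1
    exact (List.getElem?_eq_some_iff.mp hj).2
  obtain ⟨qf, hqf, hqfe⟩ := hacc
  have hqfe : qf ∈ R.T.evalFrom R.T.start p := hqfe
  rw [hsplit, evalFrom_append] at hqfe
  have hqfe' : qf ∈ R.T.evalFrom
      (R.T.stepSet (R.T.evalFrom R.T.start (p.take j)) (b, y)) (p.drop (j + 1)) := hqfe
  rw [mem_evalFrom_exists] at hqfe'
  obtain ⟨q', hq', hqfe'⟩ := hqfe'
  rw [NFA.mem_stepSet] at hq'
  obtain ⟨q, hq, hq'step⟩ := hq'
  have htklen : (p.take j).length = j := by simp; omega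
  have hy : y ∈ Psi R w s j := by simpa using hvalid j b y hj
  have hqF : q ∈ Fset R w s j := by
    refine ⟨p.take j, htklen, ?_, hq⟩
    intro m x z hm
    have hmlt : m < j := by
      have := (List.getElem?_eq_some_iff.mp hm).1
      omega
    rw [List.getElem?_take_of_lt hmlt] at hm
    simpa using hvalid m x z hm
  have hdroplen : j + 1 + (p.drop (j + 1)).length = w.length := by
    simp; omega
  have hvalid_drop : PValid R w s (j + 1) (p.drop (j + 1)) := by
    intro m x z hm
    rw [List.getElem?_drop] at hm
    simpa [Nat.add_comm, Nat.add_assoc, Nat.add_left_comm] using hvalid (j + 1 + m) x z hm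
  have hq'B : q' ∈ Bset R w s (j + 1) := ⟨p.drop (j + 1), hdroplen, hvalid_drop, ⟨qf, hqfe', hqf⟩⟩
  have hqB : q ∈ Bset R w s j := Bset_extend R w hq'B hy hq'step
  have hq'F : q' ∈ Fset R w s (j + 1) := Fset_extend R w hqF hy hq'step
  exact ⟨y, q, q', ⟨hqF, hqB⟩, ⟨hq'F, hq'B⟩, hq'step, hy⟩

/-- Converse: a transition between usable anchors consuming a derived letter
produces its source letter. -/
theorem psi_production_intro (w : List Sig) {s j : ℕ} {b y : Sig} {q q' : QT}
    (hq : q ∈ Fset R w s j) (hq' : q' ∈ Bset R w s (j + 1))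
    (hstep : q' ∈ R.T.step q (b, y)) (hy : y ∈ Psi R w s j) :
    b ∈ Psi R w (s + 1) j := by
  obtain ⟨p₁, hlen₁, hv₁, hq₁⟩ := hq
  obtain ⟨p₂, hlen₂, hv₂, qf, hqf₁, hqf₂⟩ := hq'
  rw [Psi_succ]
  right
  refine ⟨p₁ ++ (b, y) :: p₂, by simp; omega, ?_, ?_, y, ?_⟩
  · rw [NFA.mem_accepts]
    refine ⟨qf, hqf₂, ?_⟩
    rw [evalFrom_append]
    rw [mem_evalFrom_exists]
    refine ⟨q, hq₁, ?_⟩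
    show qf ∈ R.T.evalFrom (R.T.stepSet {q} (b, y)) p₂
    refine evalFrom_mono R.T ?_ p₂ hqf₁
    intro z hz; cases hz
    rw [NFA.mem_stepSet]; exact ⟨q, rfl, hstep⟩
  · intro m x z hm
    rcases Nat.lt_or_ge m j with h | h
    · rw [List.getElem?_append_left (by omega)] at hm
      exact hv₁ m x z hm
    · rw [List.getElem?_append_right (by omega)] at hm
      rcases Nat.eq_or_lt_of_le h with h' | h'
      · subst h'
        rw [hlen₁, Nat.sub_self] at hm
        simp only [List.getElem?_cons_zero, Option.some.injEq, Prod.mk.injEq] at hm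
        rw [Nat.zero_add, ← hm.2]
        exact hy
      · have : m - p₁.length = (m - j - 1) + 1 := by omega
        rw [this, List.getElem?_cons_succ] at hm
        have := hv₂ (m - j - 1) x z hm
        have harith : j + 1 + (m - j - 1) = m := by omega
        rw [harith] at this
        simpa using this
  · rw [List.getElem?_append_right (by omega), hlen₁, Nat.sub_self]
    simp

/-- Letters in `Z` along a pair word admit a uniform round. -/
theorem pvalid_of_Z (w : List Sig) :
    ∀ (p : List (Sig × Sig)) (off : ℕ),
      (∀ m x y, p[m]? = some (x, y) → y ∈ Zset R w (off + m)) →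
      ∃ s, PValid R w s off p := by
  intro p
  induction p with
  | nil => exact fun off _ => ⟨0, fun m x y hm => by simp at hm⟩
  | cons hd tl ih =>
    intro off hp
    obtain ⟨x0, y0⟩ := hd
    obtain ⟨s0, hs0⟩ := hp 0 x0 y0 (by simp)
    obtain ⟨s1, hs1⟩ := ih (off + 1) (fun m x y hm => by
      have := hp (m + 1) x y (by simpa using hm)
      simpa [Nat.add_comm, Nat.add_assoc, Nat.add_left_comm] using this)
    refine ⟨max s0 s1, ?_⟩
    intro m x y hm
    cases m with
    | zero =>
      simp only [List.getElem?_cons_zero, Option.some.injEq, Prod.mk.injEq] at hm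
      rw [← hm.2]
      exact Psi_mono R w (le_max_left _ _) _ hs0
    | succ m =>
      simp only [List.getElem?_cons_succ] at hm
      have := hs1 m x y hm
      have harith : off + (m + 1) = off + 1 + m := by omega
      rw [harith]
      exact Psi_mono R w (le_max_right _ _) _ this

/-! ### The characterization of `⇝₁` (Claim A) -/

theorem not_sat1_iff (v : List Sig) (φ : OneFormula Sig) :
    ¬ Sat1 v φ ↔ v.length = φ.length ∧
      ∀ (j : ℕ) (h₁ : j < v.length) (h₂ : j < φ.length), v.get ⟨j, h₁⟩ ∉ φ.get ⟨j, h₂⟩ := by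
  unfold Sat1
  push_neg
  tauto

theorem potReach1_iff (u w : List Sig) :
    PotReach1 R u w ↔
      u.length = w.length ∧ ∀ j x, u[j]? = some x → x ∈ Zset R w j := by
  constructor
  · intro h
    have hlen : u.length = w.length := by
      by_contra hne
      set φ : OneFormula Sig := List.replicate w.length ∅ with hφ
      have hφlen : φ.length = w.length := by simp [hφ]
      have hind : IsInductive1Formula R φ := by
        intro v v' hsat hstep
        left
        rcases hsat with hl | ⟨j, h₁, h₂, hj⟩
        · intro hcon
          exact hl (by rw [hstep.1]; exact hcon)
        · exfalso; simpa [hφ] using hj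
      have hsatu : Sat1 u φ := Or.inl (by rw [hφlen]; exact hne)
      have := h φ hind hsatu
      rcases this with hl | ⟨j, h₁, h₂, hj⟩
      · exact hl (hφlen.symm)
      · simpa [hφ] using hj
    refine ⟨hlen, ?_⟩
    intro j x hx
    by_contra hnz
    set φ : OneFormula Sig := List.ofFn (n := w.length) (fun j => {a | a ∉ Zset R w j.1}) with hφ
    have hφlen : φ.length = w.length := by simp [hφ]
    have hφget : ∀ (j : ℕ) (h : j < φ.length), φ.get ⟨j, h⟩ = {a | a ∉ Zset R w j} := by
      intro j hj
      simp [hφ, List.get_eq_getElem, List.getElem_ofFn]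
    have hind : IsInductive1Formula R φ := by
      intro v v' hsat hstep
      by_contra hnot
      rw [not_sat1_iff] at hnot
      obtain ⟨hvlen', hvget'⟩ := hnot
      have hvv' : v.length = v'.length := hstep.1
      -- all letters of v' are derivable
      have hcd : ∀ m x y, (v.zip v')[m]? = some (x, y) → y ∈ Zset R w m := by
        intro m x y hm
        rw [List.getElem?_zip_eq_some] at hm
        have hmlt : m < v'.length := (List.getElem?_eq_some_iff.mp hm.2).1
        have h₂ : m < φ.length := by omega
        have := hvget' m (by omega) h₂
        rw [hφget m h₂] at this
        simp only [mem_setOf_eq, not_not] at this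
        have hval : v'.get ⟨m, by omega⟩ = y := by
          have := (List.getElem?_eq_some_iff.mp hm.2).2
          simpa [List.get_eq_getElem] using this
        rwa [hval] at this
      obtain ⟨s, hs⟩ := pvalid_of_Z R w (v.zip v') 0 (by
        intro m x y hm
        simpa using hcd m x y hm)
      -- every letter of v is derivable at round s+1
      have hvz : ∀ (m : ℕ) (h : m < v.length), v.get ⟨m, h⟩ ∈ Psi R w (s + 1) m := by
        intro m hm
        rw [Psi_succ]
        right
        refine ⟨v.zip v', ?_, hstep.2, hs, v'.get ⟨m, by omega⟩, ?_⟩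
        · rw [List.length_zip]; omega
        · rw [List.getElem?_zip_eq_some]
          constructor
          · exact List.getElem?_eq_some_iff.mpr ⟨hm, by simp [List.get_eq_getElem]⟩
          · exact List.getElem?_eq_some_iff.mpr ⟨by omega, by simp [List.get_eq_getElem]⟩
      -- hence v does not satisfy φ
      have : ¬ Sat1 v φ := by
        rw [not_sat1_iff]
        refine ⟨by omega, ?_⟩
        intro m h₁ h₂
        rw [hφget m h₂]
        simp only [mem_setOf_eq, not_not]
        exact ⟨s + 1, hvz m h₁⟩
      exact this hsat
    have hsatu : Sat1 u φ := by
      right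
      have hjlt : j < u.length := (List.getElem?_eq_some_iff.mp hx).1
      refine ⟨j, hjlt, by omega, ?_⟩
      rw [hφget j (by omega)]
      have : u.get ⟨j, hjlt⟩ = x := by
        have := (List.getElem?_eq_some_iff.mp hx).2
        simpa [List.get_eq_getElem] using this
      rw [this]
      exact hnz
    have hsw := h φ hind hsatu
    rcases hsw with hl | ⟨m, h₁, h₂, hm⟩
    · exact hl hφlen.symm
    · rw [hφget m h₂] at hm
      refine hm ⟨0, ?_⟩
      show w[m]? = some (w.get ⟨m, h₁⟩)
      exact List.getElem?_eq_some_iff.mpr ⟨h₁, by simp [List.get_eq_getElem]⟩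
  · rintro ⟨hlen, hcov⟩
    intro φ hind hsatu
    by_cases hl : w.length = φ.length
    swap
    · exact Or.inl hl
    by_contra hnsw
    rw [not_sat1_iff] at hnsw
    obtain ⟨_, hwget⟩ := hnsw
    -- key: derivable letters avoid φ
    have key : ∀ (s j : ℕ) (x : Sig), x ∈ Psi R w s j →
        ∀ (h₂ : j < φ.length), x ∉ φ.get ⟨j, h₂⟩ := by
      intro s
      induction s with
      | zero =>
        intro j x hx h₂
        have hx' : w[j]? = some x := hx
        have hjlt : j < w.length := (List.getElem?_eq_some_iff.mp hx').1
        have : w.get ⟨j, hjlt⟩ = x := by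
          have := (List.getElem?_eq_some_iff.mp hx').2
          simpa [List.get_eq_getElem] using this
        rw [← this]
        exact hwget j hjlt h₂
      | succ s ih =>
        intro j x hx h₂
        rw [Psi_succ] at hx
        rcases hx with hx | hx
        · exact ih j x hx h₂
        obtain ⟨p, hplen, hpacc, hpval, y, hpj⟩ := hx
        set v := p.map Prod.fst with hv
        set v' := p.map Prod.snd with hv'
        have hzip : v.zip v' = p := by
          rw [hv, hv', List.zip_map']
          simp
        have hstep : R.Step v v' := ⟨by simp [hv, hv'], by rwa [hzip]⟩
        have hnotv' : ¬ Sat1 v' φ := by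
          rw [not_sat1_iff]
          refine ⟨by simp [hv']; omega, ?_⟩
          intro m h₁ h₂'
          have hm : p[m]? = some (p[m]'(by simpa [hv'] using h₁)) :=
            List.getElem?_eq_some_iff.mpr ⟨by simpa [hv'] using h₁, rfl⟩
          have hy : (p[m]'(by simpa [hv'] using h₁)).2 ∈ Psi R w s m := by
            have := hpval m _ _ (by rw [hm])
            simpa using this
          have hval : v'.get ⟨m, h₁⟩ = (p[m]'(by simpa [hv'] using h₁)).2 := by
            simp [hv', List.get_eq_getElem]
          rw [hval]
          exact ih m _ hy h₂'
        have hnotv : ¬ Sat1 v φ := fun hsv => hnotv' (hind v v' hsv hstep)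
        rw [not_sat1_iff] at hnotv
        obtain ⟨_, hvget⟩ := hnotv
        have hjlt : j < p.length := (List.getElem?_eq_some_iff.mp hpj).1
        have hx : v.get ⟨j, by simpa [hv] using hjlt⟩ = x := by
          have := (List.getElem?_eq_some_iff.mp hpj).2
          simp [hv, List.get_eq_getElem]
          rw [this]
        rw [← hx]
        exact hvget j (by simpa [hv] using hjlt) h₂
    -- u does not satisfy φ : contradiction
    rcases hsatu with hul | ⟨j, h₁, h₂, hj⟩
    · exact hul (by omega)
    · obtain ⟨s, hjz⟩ := hcov j (u.get ⟨j, h₁⟩)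
        (List.getElem?_eq_some_iff.mpr ⟨h₁, by simp [List.get_eq_getElem]⟩)
      exact key s j _ hjz h₂ hj

/-! ### Chain families and summaries -/

section Chains

variable [Finite QT]

/-- Level of a set within a family. -/
noncomputable def levIn (Fam : Set (Set QT)) (V : Set QT) : ℕ := Set.ncard {V' ∈ Fam | V' ⊂ V}

theorem levIn_mono (Fam : Set (Set QT)) {V V' : Set QT} (h : V ⊆ V') :
    levIn Fam V ≤ levIn Fam V' := by
  apply Set.ncard_le_ncard _ (Set.toFinite _)
  rintro W ⟨hW, hWV⟩
  exact ⟨hW, lt_of_lt_of_le hWV h⟩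

theorem levIn_strict (Fam : Set (Set QT)) {V V' : Set QT} (hV : V ∈ Fam) (h : V ⊂ V') :
    levIn Fam V < levIn Fam V' := by
  have hsub : insert V {W ∈ Fam | W ⊂ V} ⊆ {W ∈ Fam | W ⊂ V'} := by
    rintro W (rfl | ⟨hW, hWV⟩)
    · exact ⟨hV, h⟩
    · exact ⟨hW, lt_trans hWV h⟩
  calc levIn Fam V < (insert V {W ∈ Fam | W ⊂ V}).ncard := by
        rw [Set.ncard_insert_of_notMem (fun hc => ssubset_irrefl V hc.2) (Set.toFinite _)]
        exact Nat.lt_succ_self _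
    _ ≤ _ := Set.ncard_le_ncard hsub (Set.toFinite _)

/-- The family of usable-state sets at a cut. -/
def fam (w : List Sig) (c : ℕ) : Set (Set QT) := {V | ∃ s, V = Uset R w s c}

theorem Uset_mem_fam (w : List Sig) (s c : ℕ) : Uset R w s c ∈ fam R w c := ⟨s, rfl⟩

theorem fam_chain (w : List Sig) (c : ℕ) {V V' : Set QT} (h : V ∈ fam R w c)
    (h' : V' ∈ fam R w c) : V ⊆ V' ∨ V' ⊆ V := by
  obtain ⟨s, rfl⟩ := h
  obtain ⟨t, rfl⟩ := h'
  rcases le_total s t with hst | hst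
  · exact Or.inl (Uset_mono R w hst c)
  · exact Or.inr (Uset_mono R w hst c)

/-- Rank of a state relative to the family at a cut. -/
noncomputable def rankf (w : List Sig) (c : ℕ) (q : QT) : ℕ := Set.ncard {V ∈ fam R w c | q ∉ V}

/-- Number of members of the family at a cut. -/
noncomputable def famCard (w : List Sig) (c : ℕ) : ℕ := (fam R w c).ncard

theorem mem_iff_rank (w : List Sig) (c : ℕ) {V : Set QT} (hV : V ∈ fam R w c) (q : QT) :
    q ∈ V ↔ rankf R w c q ≤ levIn (fam R w c) V := by
  constructor
  · intro hq
    apply Set.ncard_le_ncard _ (Set.toFinite _)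
    rintro W ⟨hW, hqW⟩
    refine ⟨hW, ?_⟩
    rcases fam_chain R w c hW hV with h | h
    · exact ssubset_of_subset_of_ne h (by rintro rfl; exact hqW hq)
    · exact absurd (h hq) hqW
  · intro hle
    by_contra hq
    have hsub : insert V {W ∈ fam R w c | W ⊂ V} ⊆ {W ∈ fam R w c | q ∉ W} := by
      rintro W (rfl | ⟨hW, hWV⟩)
      · exact ⟨hV, hq⟩
      · exact ⟨hW, fun hc => hq (hWV.1 hc)⟩
    have : levIn (fam R w c) V + 1 ≤ rankf R w c q := by
      calc levIn (fam R w c) V + 1 = (insert V {W ∈ fam R w c | W ⊂ V}).ncard := by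
            rw [Set.ncard_insert_of_notMem (fun hc => ssubset_irrefl V hc.2) (Set.toFinite _)]
            rfl
        _ ≤ _ := Set.ncard_le_ncard hsub (Set.toFinite _)
    omega

theorem levIn_lt_famCard (w : List Sig) (c : ℕ) {V : Set QT} (hV : V ∈ fam R w c) :
    levIn (fam R w c) V < famCard R w c := by
  apply Set.ncard_lt_ncard _ (Set.toFinite _)
  constructor
  · rintro W ⟨hW, _⟩; exact hW
  · intro hcon
    have := hcon hV
    exact ssubset_irrefl V this.2

theorem rank_le_famCard (w : List Sig) (c : ℕ) (q : QT) :
    rankf R w c q ≤ famCard R w c :=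
  Set.ncard_le_ncard (fun W hW => hW.1) (Set.toFinite _)

theorem famCard_le (w : List Sig) (c : ℕ) [Fintype QT] :
    famCard R w c ≤ Fintype.card QT + 1 := by
  have hinj : Set.InjOn Set.ncard (fam R w c) := by
    intro V hV V' hV' he
    rcases fam_chain R w c hV hV' with h | h
    · by_contra hne
      have := Set.ncard_lt_ncard (ssubset_of_subset_of_ne h hne) (Set.toFinite _)
      omega
    · by_contra hne
      have := Set.ncard_lt_ncard (ssubset_of_subset_of_ne h (Ne.symm hne)) (Set.toFinite _)
      omega
  have h1 : famCard R w c = (Set.ncard '' fam R w c).ncard :=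
    (Set.ncard_image_of_injOn hinj).symm
  rw [h1]
  have h2 : Set.ncard '' fam R w c ⊆ ↑(Finset.range (Fintype.card QT + 1)) := by
    rintro k ⟨V, _, rfl⟩
    simp only [Finset.coe_range, Set.mem_Iio]
    have : V.ncard ≤ (Set.univ : Set QT).ncard :=
      Set.ncard_le_ncard (Set.subset_univ V) (Set.toFinite _)
    rw [Set.ncard_univ, Nat.card_eq_fintype_card] at this
    omega
  calc (Set.ncard '' fam R w c).ncard ≤ (↑(Finset.range (Fintype.card QT + 1)) : Set ℕ).ncard :=
        Set.ncard_le_ncard h2 (Set.toFinite _)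
    _ = Fintype.card QT + 1 := by rw [Set.ncard_coe_finset, Finset.card_range]

/-- levels are injective on a chain family. -/
theorem levIn_injOn_fam (w : List Sig) (c : ℕ) :
    Set.InjOn (levIn (fam R w c)) (fam R w c) := by
  intro V hV V' hV' he
  rcases fam_chain R w c hV hV' with h | h
  · by_contra hne
    have := levIn_strict (fam R w c) hV (ssubset_of_subset_of_ne h hne)
    omega
  · by_contra hne
    have := levIn_strict (fam R w c) hV' (ssubset_of_subset_of_ne h (Ne.symm hne))
    omega

/-- The rank function and family size determine the family. -/
theorem fam_eq_of_rank_eq {w w' : List Sig} {c c' : ℕ}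
    (hr : rankf R w c = rankf R w' c') (hc : famCard R w c = famCard R w' c') :
    fam R w c ⊆ fam R w' c' := by
  intro V hV
  set j := levIn (fam R w c) V with hj
  have hjlt : j < famCard R w c := levIn_lt_famCard R w c hV
  -- find the member of fam' with level j
  have hexists : ∃ V' ∈ fam R w' c', levIn (fam R w' c') V' = j := by
    classical
    set F := (Set.toFinite (fam R w' c')).toFinset with hF
    have hcard : F.card = famCard R w' c' := by
      rw [hF]
      exact (Set.ncard_eq_toFinset_card _ (Set.toFinite _)).symm
    have himsub : F.image (levIn (fam R w' c')) ⊆ Finset.range (famCard R w' c') := by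
      intro k hk
      rw [Finset.mem_image] at hk
      obtain ⟨V', hV', rfl⟩ := hk
      rw [Finset.mem_range]
      exact levIn_lt_famCard R w' c' (by simpa [hF] using hV')
    have himcard : (F.image (levIn (fam R w' c'))).card = famCard R w' c' := by
      rw [Finset.card_image_of_injOn (by
        intro a ha b hb
        exact levIn_injOn_fam R w' c' (by simpa [hF] using ha) (by simpa [hF] using hb))]
      exact hcard
    have heq : F.image (levIn (fam R w' c')) = Finset.range (famCard R w' c') :=
      Finset.eq_of_subset_of_card_le himsub (by rw [himcard, Finset.card_range])
    have hjmem : j ∈ Finset.range (famCard R w' c') := by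
      rw [Finset.mem_range]; omega
    rw [← heq, Finset.mem_image] at hjmem
    obtain ⟨V', hV', hlev⟩ := hjmem
    exact ⟨V', by simpa [hF] using hV', hlev⟩
  obtain ⟨V', hV', hlev⟩ := hexists
  have : V = V' := by
    ext q
    rw [mem_iff_rank R w c hV q, mem_iff_rank R w' c' hV' q, hlev, ← hj, hr]
  rwa [this]

end Chains

/-! ### Witnesses and the automaton -/

section Automaton

variable [Fintype QT]

noncomputable def capRank (w : List Sig) (c : ℕ) (q : QT) : Fin (Fintype.card QT + 2) :=
  ⟨rankf R w c q, by
    have h1 := rank_le_famCard R w c q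
    have h2 := famCard_le R w c
    omega⟩

noncomputable def capCard (w : List Sig) (c : ℕ) : Fin (Fintype.card QT + 2) :=
  ⟨famCard R w c, by have := famCard_le R w c; omega⟩

/-- A witness: a word with initial-cover data. -/
structure Wit (R : RTS Sig QI QT) : Type where
  w : List Sig
  u : List Sig
  ir : ℕ → QI
  hlen : u.length = w.length
  hstart : ir 0 ∈ R.I.start
  haccept : ir w.length ∈ R.I.accept
  hstep : ∀ c x, u[c]? = some x → ir (c + 1) ∈ R.I.step (ir c) x
  hcover : ∀ j x, u[j]? = some x → x ∈ Zset R w j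

/-- The summary of a witness at a cut. -/
noncomputable def summ (W : Wit R) (c : ℕ) :
    (QT → Fin (Fintype.card QT + 2)) × Fin (Fintype.card QT + 2) × QI :=
  (capRank R W.w c, capCard R W.w c, W.ir c)

/-- The NFA recognizing `Ind1 R`. -/
noncomputable def autA :
    NFA Sig ((QT → Fin (Fintype.card QT + 2)) × Fin (Fintype.card QT + 2) × QI) where
  step := fun p a =>
    {p' | ∃ (W : Wit R) (c : ℕ), c < W.w.length ∧ W.w[c]? = some a ∧
      p = summ R W c ∧ p' = summ R W (c + 1)}
  start := {p | ∃ W : Wit R, p = summ R W 0}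
  accept := {p | ∃ W : Wit R, p = summ R W W.w.length}

theorem completeness {w : List Sig} (hw : w ∈ Ind1 R) : w ∈ (autA R).accepts := by
  obtain ⟨u, hu, hpr⟩ := hw
  rw [potReach1_iff] at hpr
  obtain ⟨hlen, hcov⟩ := hpr
  rw [NFA.mem_accepts] at hu
  obtain ⟨qf, hqf, hqfe⟩ := hu
  obtain ⟨f, hf0, hflen, hfstep⟩ := exists_run R.I u R.I.start qf hqfe
  set W : Wit R := ⟨w, u, f, hlen, hf0, by rw [← hlen, hflen]; exact hqf, hfstep, hcov⟩ with hW
  have hWw : W.w = w := rfl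
  have key : ∀ c, c ≤ w.length → summ R W c ∈ (autA R).evalFrom (autA R).start (w.take c) := by
    intro c
    induction c with
    | zero => intro _; rw [List.take_zero]; exact ⟨W, rfl⟩
    | succ c ih =>
      intro hc
      have hclt : c < w.length := by omega
      have htake : w.take (c + 1) = w.take c ++ [w[c]'hclt] := by
        rw [List.take_succ]
        congr 1
        rw [(List.getElem?_eq_some_iff).mpr ⟨hclt, rfl⟩]
        rfl
      rw [htake, NFA.evalFrom_append, NFA.evalFrom_singleton, NFA.mem_stepSet]
      refine ⟨summ R W c, ih (by omega), ?_⟩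
      exact ⟨W, c, by rw [hWw]; exact hclt,
        by rw [hWw]; exact (List.getElem?_eq_some_iff).mpr ⟨hclt, rfl⟩, rfl, rfl⟩
  rw [NFA.mem_accepts]
  refine ⟨summ R W w.length, ⟨W, rfl⟩, ?_⟩
  have := key w.length (le_refl _)
  rwa [List.take_length] at this

end Automaton

/-! ### Mosaic stitching -/

section Mosaic

variable [Fintype QT]
variable (w : List Sig) (WW : ℕ → Wit R) (kk : ℕ → ℕ)

/-- family at a mosaic cut -/
noncomputable def famM (c : ℕ) : Set (Set QT) :=
  if c < w.length then fam R (WW c).w (kk c)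
  else fam R (WW (w.length - 1)).w (kk (w.length - 1) + 1)

noncomputable def minL (c : ℕ) (V : Set QT) : ℕ := sInf {s | Uset R (WW c).w s (kk c) = V}
noncomputable def minR (c : ℕ) (V : Set QT) : ℕ := sInf {s | Uset R (WW c).w s (kk c + 1) = V}
noncomputable def nextV (c : ℕ) (V : Set QT) : Set QT :=
  Uset R (WW c).w (minL R WW kk c V) (kk c + 1)
noncomputable def prevV (c : ℕ) (V : Set QT) : Set QT :=
  Uset R (WW c).w (minR R WW kk c V) (kk c)

noncomputable def seqR (c : ℕ) (V : Set QT) : ℕ → Set QT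
  | 0 => V
  | i + 1 => nextV R WW kk (c + i) (seqR c V i)

noncomputable def seqL (c : ℕ) (V : Set QT) : ℕ → Set QT
  | 0 => V
  | i + 1 => prevV R WW kk (c - (i + 1)) (seqL c V i)

noncomputable def lsR (c : ℕ) (V : Set QT) : ℕ :=
  ∑ i ∈ Finset.range (w.length - c + 1), levIn (famM R w WW kk (c + i)) (seqR R WW kk c V i)

noncomputable def lsL (c : ℕ) (V : Set QT) : ℕ :=
  ∑ i ∈ Finset.range (c + 1), levIn (famM R w WW kk (c - i)) (seqL R WW kk c V i)

variable (hmatch : ∀ c, c + 1 < w.length →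
    fam R (WW c).w (kk c + 1) = fam R (WW (c + 1)).w (kk (c + 1)))

theorem famM_of_lt {c : ℕ} (hc : c < w.length) :
    famM R w WW kk c = fam R (WW c).w (kk c) := if_pos hc

include hmatch in
theorem famM_succ {c : ℕ} (hc : c < w.length) :
    fam R (WW c).w (kk c + 1) = famM R w WW kk (c + 1) := by
  unfold famM
  rcases Nat.lt_or_ge (c + 1) w.length with h | h
  · rw [if_pos h]; exact hmatch c h
  · rw [if_neg (by omega)]
    have : w.length - 1 = c := by omega
    rw [this]

theorem minL_spec {c : ℕ} {V : Set QT} (hV : V ∈ fam R (WW c).w (kk c)) :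
    Uset R (WW c).w (minL R WW kk c V) (kk c) = V := by
  have hne : {s | Uset R (WW c).w s (kk c) = V}.Nonempty := by
    obtain ⟨s, rfl⟩ := hV; exact ⟨s, rfl⟩
  exact Nat.sInf_mem hne

theorem minR_spec {c : ℕ} {V : Set QT} (hV : V ∈ fam R (WW c).w (kk c + 1)) :
    Uset R (WW c).w (minR R WW kk c V) (kk c + 1) = V := by
  have hne : {s | Uset R (WW c).w s (kk c + 1) = V}.Nonempty := by
    obtain ⟨s, rfl⟩ := hV; exact ⟨s, rfl⟩
  exact Nat.sInf_mem hne

theorem minL_le {c s : ℕ} {V : Set QT} (h : Uset R (WW c).w s (kk c) = V) :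
    minL R WW kk c V ≤ s := Nat.sInf_le h

theorem minR_le {c s : ℕ} {V : Set QT} (h : Uset R (WW c).w s (kk c + 1) = V) :
    minR R WW kk c V ≤ s := Nat.sInf_le h

theorem minL_mono {c : ℕ} {V V' : Set QT} (hV : V ∈ fam R (WW c).w (kk c))
    (hV' : V' ∈ fam R (WW c).w (kk c)) (hsub : V ⊆ V') :
    minL R WW kk c V ≤ minL R WW kk c V' := by
  obtain ⟨a, rfl⟩ := hV
  have hspec := minL_spec R WW kk hV'
  rcases Nat.le_total a (minL R WW kk c V') with h | h
  · exact le_trans (minL_le R WW kk rfl) h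
  · have heq : Uset R (WW c).w a (kk c) = V' :=
      le_antisymm hsub (by rw [← hspec]; exact Uset_mono R _ h _)
    exact le_of_eq (by rw [heq])

theorem minR_mono {c : ℕ} {V V' : Set QT} (hV : V ∈ fam R (WW c).w (kk c + 1))
    (hV' : V' ∈ fam R (WW c).w (kk c + 1)) (hsub : V ⊆ V') :
    minR R WW kk c V ≤ minR R WW kk c V' := by
  obtain ⟨a, rfl⟩ := hV
  have hspec := minR_spec R WW kk hV'
  rcases Nat.le_total a (minR R WW kk c V') with h | h
  · exact le_trans (minR_le R WW kk rfl) h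
  · have heq : Uset R (WW c).w a (kk c + 1) = V' :=
      le_antisymm hsub (by rw [← hspec]; exact Uset_mono R _ h _)
    exact le_of_eq (by rw [heq])

theorem nextV_mono {c : ℕ} {V V' : Set QT} (hV : V ∈ fam R (WW c).w (kk c))
    (hV' : V' ∈ fam R (WW c).w (kk c)) (hsub : V ⊆ V') :
    nextV R WW kk c V ⊆ nextV R WW kk c V' :=
  Uset_mono R _ (minL_mono R WW kk hV hV' hsub) _

theorem prevV_mono {c : ℕ} {V V' : Set QT} (hV : V ∈ fam R (WW c).w (kk c + 1))
    (hV' : V' ∈ fam R (WW c).w (kk c + 1)) (hsub : V ⊆ V') :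
    prevV R WW kk c V ⊆ prevV R WW kk c V' :=
  Uset_mono R _ (minR_mono R WW kk hV hV' hsub) _

theorem nextV_mem (c : ℕ) (V : Set QT) :
    nextV R WW kk c V ∈ fam R (WW c).w (kk c + 1) := ⟨_, rfl⟩

theorem prevV_mem (c : ℕ) (V : Set QT) :
    prevV R WW kk c V ∈ fam R (WW c).w (kk c) := ⟨_, rfl⟩

theorem galois_np {c : ℕ} {V : Set QT} (hV : V ∈ fam R (WW c).w (kk c + 1)) :
    nextV R WW kk c (prevV R WW kk c V) ⊆ V := by
  have h1 : minL R WW kk c (prevV R WW kk c V) ≤ minR R WW kk c V :=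
    minL_le R WW kk rfl
  calc nextV R WW kk c (prevV R WW kk c V)
      ⊆ Uset R (WW c).w (minR R WW kk c V) (kk c + 1) := Uset_mono R _ h1 _
    _ = V := minR_spec R WW kk hV

theorem galois_pn {c : ℕ} {V : Set QT} (hV : V ∈ fam R (WW c).w (kk c)) :
    prevV R WW kk c (nextV R WW kk c V) ⊆ V := by
  have h1 : minR R WW kk c (nextV R WW kk c V) ≤ minL R WW kk c V :=
    minR_le R WW kk rfl
  calc prevV R WW kk c (nextV R WW kk c V)
      ⊆ Uset R (WW c).w (minL R WW kk c V) (kk c) := Uset_mono R _ h1 _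
    _ = V := minL_spec R WW kk hV

include hmatch in
theorem seqR_mem : ∀ (i c : ℕ) (V : Set QT), c + i ≤ w.length → c < w.length →
    V ∈ famM R w WW kk c → seqR R WW kk c V i ∈ famM R w WW kk (c + i) := by
  intro i
  induction i with
  | zero => intro c V _ _ hV; exact hV
  | succ i ih =>
    intro c V hle hc hV
    show nextV R WW kk (c + i) (seqR R WW kk c V i) ∈ famM R w WW kk (c + i + 1)
    rw [← famM_succ R w WW kk hmatch (c := c + i) (by omega)]
    exact nextV_mem R WW kk _ _

include hmatch in
theorem seqL_mem : ∀ (i c : ℕ) (V : Set QT), i ≤ c → c ≤ w.length → 0 < w.length →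
    V ∈ famM R w WW kk c → seqL R WW kk c V i ∈ famM R w WW kk (c - i) := by
  intro i
  induction i with
  | zero => intro c V _ _ _ hV; exact hV
  | succ i ih =>
    intro c V hle hc h0 hV
    show prevV R WW kk (c - (i + 1)) (seqL R WW kk c V i) ∈ famM R w WW kk (c - (i + 1))
    rw [famM_of_lt R w WW kk (by omega)]
    exact prevV_mem R WW kk _ _

include hmatch in
theorem seqR_mono : ∀ (i c : ℕ) (V V' : Set QT), c + i ≤ w.length → c < w.length →
    V ∈ famM R w WW kk c → V' ∈ famM R w WW kk c → V ⊆ V' →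
    seqR R WW kk c V i ⊆ seqR R WW kk c V' i := by
  intro i
  induction i with
  | zero => intro c V V' _ _ _ _ h; exact h
  | succ i ih =>
    intro c V V' hle hc hV hV' hsub
    show nextV R WW kk (c + i) _ ⊆ nextV R WW kk (c + i) _
    have hmem : seqR R WW kk c V i ∈ famM R w WW kk (c + i) :=
      seqR_mem R w WW kk hmatch i c V (by omega) hc hV
    have hmem' : seqR R WW kk c V' i ∈ famM R w WW kk (c + i) :=
      seqR_mem R w WW kk hmatch i c V' (by omega) hc hV'
    rw [famM_of_lt R w WW kk (by omega : c + i < w.length)] at hmem hmem'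
    exact nextV_mono R WW kk hmem hmem' (ih c V V' (by omega) hc hV hV' hsub)

include hmatch in
theorem seqL_mono : ∀ (i c : ℕ) (V V' : Set QT), i ≤ c → c ≤ w.length → 0 < w.length →
    V ∈ famM R w WW kk c → V' ∈ famM R w WW kk c → V ⊆ V' →
    seqL R WW kk c V i ⊆ seqL R WW kk c V' i := by
  intro i
  induction i with
  | zero => intro c V V' _ _ _ _ _ h; exact h
  | succ i ih =>
    intro c V V' hle hc h0 hV hV' hsub
    show prevV R WW kk (c - (i + 1)) _ ⊆ prevV R WW kk (c - (i + 1)) _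
    have hmem : seqL R WW kk c V i ∈ famM R w WW kk (c - i) :=
      seqL_mem R w WW kk hmatch i c V (by omega) hc h0 hV
    have hmem' : seqL R WW kk c V' i ∈ famM R w WW kk (c - i) :=
      seqL_mem R w WW kk hmatch i c V' (by omega) hc h0 hV'
    have hcut : (c - (i + 1)) + 1 = c - i := by omega
    have hlt : c - (i + 1) < w.length := by omega
    rw [← hcut, ← famM_succ R w WW kk hmatch hlt] at hmem hmem'
    exact prevV_mono R WW kk hmem hmem' (ih c V V' (by omega) hc h0 hV hV' hsub)

include hmatch in
theorem lsR_mono {c : ℕ} {V V' : Set QT} (hc : c ≤ w.length)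
    (hV : V ∈ famM R w WW kk c) (hV' : V' ∈ famM R w WW kk c) (hsub : V ⊆ V') :
    lsR R w WW kk c V ≤ lsR R w WW kk c V' := by
  apply Finset.sum_le_sum
  intro i hi
  rw [Finset.mem_range] at hi
  cases i with
  | zero => exact levIn_mono _ hsub
  | succ i =>
    have hclt : c < w.length := by omega
    exact levIn_mono _ (seqR_mono R w WW kk hmatch (i + 1) c V V' (by omega) hclt hV hV' hsub)

include hmatch in
theorem lsR_strict {c : ℕ} {V V' : Set QT} (hc : c ≤ w.length)
    (hV : V ∈ famM R w WW kk c) (hV' : V' ∈ famM R w WW kk c) (hsub : V ⊂ V') :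
    lsR R w WW kk c V < lsR R w WW kk c V' := by
  apply Finset.sum_lt_sum
  · intro i hi
    rw [Finset.mem_range] at hi
    cases i with
    | zero => exact levIn_mono _ hsub.1
    | succ i =>
      have hclt : c < w.length := by omega
      exact levIn_mono _ (seqR_mono R w WW kk hmatch (i + 1) c V V' (by omega) hclt hV hV' hsub.1)
  · refine ⟨0, by simp, ?_⟩
    exact levIn_strict _ hV hsub

include hmatch in
theorem lsL_mono {c : ℕ} {V V' : Set QT} (hc : c ≤ w.length) (h0 : 0 < w.length)
    (hV : V ∈ famM R w WW kk c) (hV' : V' ∈ famM R w WW kk c) (hsub : V ⊆ V') :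
    lsL R w WW kk c V ≤ lsL R w WW kk c V' := by
  apply Finset.sum_le_sum
  intro i hi
  rw [Finset.mem_range] at hi
  rcases Nat.le_total i c with h | h
  · exact levIn_mono _ (seqL_mono R w WW kk hmatch i c V V' h hc h0 hV hV' hsub)
  · have : i = c := by omega
    subst this
    exact levIn_mono _ (seqL_mono R w WW kk hmatch i i V V' (le_refl _) hc h0 hV hV' hsub)

include hmatch in
theorem lsL_strict {c : ℕ} {V V' : Set QT} (hc : c ≤ w.length) (h0 : 0 < w.length)
    (hV : V ∈ famM R w WW kk c) (hV' : V' ∈ famM R w WW kk c) (hsub : V ⊂ V') :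
    lsL R w WW kk c V < lsL R w WW kk c V' := by
  apply Finset.sum_lt_sum
  · intro i hi
    rw [Finset.mem_range] at hi
    exact levIn_mono _ (seqL_mono R w WW kk hmatch i c V V' (by omega) hc h0 hV hV' hsub.1)
  · refine ⟨0, by simp, ?_⟩
    exact levIn_strict _ hV hsub

theorem seqR_shift (c : ℕ) (V : Set QT) :
    ∀ i, seqR R WW kk c V (i + 1) = seqR R WW kk (c + 1) (nextV R WW kk c V) i := by
  intro i
  induction i with
  | zero => rfl
  | succ i ih =>
    show nextV R WW kk (c + (i + 1)) (seqR R WW kk c V (i + 1)) = _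
    rw [ih]
    show _ = nextV R WW kk (c + 1 + i) (seqR R WW kk (c + 1) (nextV R WW kk c V) i)
    have harith : c + (i + 1) = c + 1 + i := by omega
    rw [harith]

theorem seqL_shift (c : ℕ) (V : Set QT) :
    ∀ i, seqL R WW kk (c + 1) V (i + 1) = seqL R WW kk c (prevV R WW kk c V) i := by
  intro i
  induction i with
  | zero =>
    show prevV R WW kk (c + 1 - 1) V = prevV R WW kk c V
    norm_num
  | succ i ih =>
    show prevV R WW kk (c + 1 - (i + 1 + 1)) (seqL R WW kk (c + 1) V (i + 1)) = _
    rw [ih]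
    show _ = prevV R WW kk (c - (i + 1)) (seqL R WW kk c (prevV R WW kk c V) i)
    have harith : c + 1 - (i + 1 + 1) = c - (i + 1) := by omega
    rw [harith]

theorem lsR_succ {c : ℕ} (hc : c < w.length) (V : Set QT) :
    lsR R w WW kk c V =
      levIn (famM R w WW kk c) V + lsR R w WW kk (c + 1) (nextV R WW kk c V) := by
  unfold lsR
  have hn : w.length - c + 1 = (w.length - (c + 1) + 1) + 1 := by omega
  rw [hn, Finset.sum_range_succ']
  rw [Nat.add_comm]
  congr 1
  apply Finset.sum_congr rfl
  intro i _
  rw [seqR_shift R WW kk c V i]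
  have harith : c + (i + 1) = c + 1 + i := by omega
  rw [harith]

theorem lsL_succ (c : ℕ) (V : Set QT) :
    lsL R w WW kk (c + 1) V =
      levIn (famM R w WW kk (c + 1)) V + lsL R w WW kk c (prevV R WW kk c V) := by
  unfold lsL
  rw [Finset.sum_range_succ']
  rw [Nat.add_comm]
  congr 1
  apply Finset.sum_congr rfl
  intro i _
  rw [seqL_shift R WW kk c V i]
  have harith : c + 1 - (i + 1) = c - i := by omega
  rw [harith]

variable (hcol : ∀ c (h : c < w.length), (WW c).w[kk c]? = some (w[c]'h))
variable (hstartV : ∀ V ∈ fam R (WW 0).w (kk 0), V ⊆ R.T.start)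
variable (hacceptV : ∀ V ∈ fam R (WW (w.length - 1)).w (kk (w.length - 1) + 1),
  V ⊆ R.T.accept)

include hcol in
theorem kk_lt {c : ℕ} (hc : c < w.length) : kk c < (WW c).w.length :=
  (List.getElem?_eq_some_iff.mp (hcol c hc)).1

include hcol in
theorem mosaic_base {c : ℕ} (hc : c < w.length) {b : Sig}
    (hb : b ∈ Psi R (WW c).w 0 (kk c)) : b ∈ Zset R w c := by
  have hb' : (WW c).w[kk c]? = some b := hb
  rw [hcol c hc] at hb'
  refine ⟨0, ?_⟩
  show w[c]? = some b
  exact List.getElem?_eq_some_iff.mpr ⟨hc, Option.some.inj hb'⟩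

include hmatch in
theorem meas_mono_s {c : ℕ} (hc : c < w.length) {s s' : ℕ} (hss : s' ≤ s) :
    lsL R w WW kk c (Uset R (WW c).w s' (kk c)) +
      lsR R w WW kk (c + 1) (Uset R (WW c).w s' (kk c + 1)) ≤
    lsL R w WW kk c (Uset R (WW c).w s (kk c)) +
      lsR R w WW kk (c + 1) (Uset R (WW c).w s (kk c + 1)) := by
  have h1 : Uset R (WW c).w s' (kk c) ∈ famM R w WW kk c := by
    rw [famM_of_lt R w WW kk hc]; exact ⟨s', rfl⟩
  have h2 : Uset R (WW c).w s (kk c) ∈ famM R w WW kk c := by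
    rw [famM_of_lt R w WW kk hc]; exact ⟨s, rfl⟩
  have h3 : Uset R (WW c).w s' (kk c + 1) ∈ famM R w WW kk (c + 1) := by
    rw [← famM_succ R w WW kk hmatch hc]; exact ⟨s', rfl⟩
  have h4 : Uset R (WW c).w s (kk c + 1) ∈ famM R w WW kk (c + 1) := by
    rw [← famM_succ R w WW kk hmatch hc]; exact ⟨s, rfl⟩
  exact Nat.add_le_add
    (lsL_mono R w WW kk hmatch (by omega) (by omega) h1 h2 (Uset_mono R _ hss _))
    (lsR_mono R w WW kk hmatch (by omega) h3 h4 (Uset_mono R _ hss _))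

include hmatch hcol hstartV hacceptV in
/-- The mosaic stitching lemma: letters derivable in a witness column are
derivable in the mosaic word. -/
theorem mosaic_main : ∀ (N s c : ℕ) (b : Sig), c < w.length →
    b ∈ Psi R (WW c).w (s + 1) (kk c) →
    lsL R w WW kk c (Uset R (WW c).w s (kk c)) +
      lsR R w WW kk (c + 1) (Uset R (WW c).w s (kk c + 1)) ≤ N →
    b ∈ Zset R w c := by
  intro N
  induction N using Nat.strong_induction_on with
  | _ N IHN =>
  intro s
  induction s using Nat.strong_induction_on with
  | _ s IHs =>
  intro c b hc hb hmeas
  rcases psi_production R (WW c).w hb with hold | ⟨y, q, q', hqU, hq'U, hstep, hy⟩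
  · -- no production needed
    cases s with
    | zero => exact mosaic_base R w WW kk hcol hc hold
    | succ s' =>
      exact IHs s' (by omega) c b hc hold
        (le_trans (meas_mono_s R w WW kk hmatch hc (by omega)) hmeas)
  · -- production at the anchor states
    -- the same-column consumed letter
    have hyZ : y ∈ Zset R w c := by
      cases s with
      | zero => exact mosaic_base R w WW kk hcol hc hy
      | succ s' =>
        exact IHs s' (by omega) c y hc hy
          (le_trans (meas_mono_s R w WW kk hmatch hc (by omega)) hmeas)
    -- prefix construction
    have buildL : ∀ (m : ℕ), m ≤ c → ∀ (V : Set QT), V ∈ famM R w WW kk m →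
        lsL R w WW kk m V + lsR R w WW kk m V ≤ N + levIn (famM R w WW kk m) V →
        ∀ x ∈ V, ∃ p : List (Sig × Sig), p.length = m ∧
          (∀ i xx yy, p[i]? = some (xx, yy) → yy ∈ Zset R w i) ∧
          x ∈ R.T.evalFrom R.T.start p := by
      intro m
      induction m with
      | zero =>
        intro _ V hV _ x hx
        rw [famM_of_lt R w WW kk (by omega)] at hV
        exact ⟨[], rfl, by intro i xx yy h; simp at h,
          by simpa using hstartV V hV hx⟩
      | succ m ihm =>
        intro hmc V hV hinv x hx
        have hmlt : m < w.length := by omega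
        have hVfam : V ∈ fam R (WW m).w (kk m + 1) := by
          rw [famM_succ R w WW kk hmatch hmlt]; exact hV
        have hspec : Uset R (WW m).w (minR R WW kk m V) (kk m + 1) = V :=
          minR_spec R WW kk hVfam
        have hxU : x ∈ Uset R (WW m).w (minR R WW kk m V) (kk m + 1) := by
          rw [hspec]; exact hx
        obtain ⟨a', y', x', hx'F, hy', hstep'⟩ := Fset_peel R (WW m).w hxU.1
        have hx'B : x' ∈ Bset R (WW m).w (minR R WW kk m V) (kk m) :=
          Bset_extend R (WW m).w hxU.2 hy' hstep'
        have hx'prev : x' ∈ prevV R WW kk m V := ⟨hx'F, hx'B⟩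
        have hprevmem : prevV R WW kk m V ∈ famM R w WW kk m := by
          rw [famM_of_lt R w WW kk hmlt]; exact prevV_mem R WW kk m V
        have hARfam : ∀ t, Uset R (WW m).w t (kk m + 1) ∈ famM R w WW kk (m + 1) := by
          intro t; rw [← famM_succ R w WW kk hmatch hmlt]; exact ⟨t, rfl⟩
        have hALfam : ∀ t, Uset R (WW m).w t (kk m) ∈ famM R w WW kk m := by
          intro t; rw [famM_of_lt R w WW kk hmlt]; exact ⟨t, rfl⟩
        -- key arithmetic: lsL m (prevV) + lsR (m+1) V ≤ N
        have hkey : lsL R w WW kk m (prevV R WW kk m V) + lsR R w WW kk (m + 1) V ≤ N := by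
          have hdec := lsL_succ R w WW kk m V
          omega
        -- consumed letter is in the mosaic saturation
        have hy'Z : y' ∈ Zset R w m := by
          rcases Nat.eq_zero_or_pos (minR R WW kk m V) with h0 | hpos
          · rw [h0] at hy'
            exact mosaic_base R w WW kk hcol hmlt hy'
          · obtain ⟨t', ht'⟩ : ∃ t', minR R WW kk m V = t' + 1 :=
              ⟨minR R WW kk m V - 1, by omega⟩
            rw [ht'] at hy'
            have h1 : lsL R w WW kk m (Uset R (WW m).w t' (kk m)) ≤
                lsL R w WW kk m (prevV R WW kk m V) := by
              apply lsL_mono R w WW kk hmatch (by omega) (by omega) (hALfam t') hprevmem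
              show Uset R (WW m).w t' (kk m) ⊆ Uset R (WW m).w (minR R WW kk m V) (kk m)
              exact Uset_mono R _ (by omega) _
            have h2 : lsR R w WW kk (m + 1) (Uset R (WW m).w t' (kk m + 1)) <
                lsR R w WW kk (m + 1) V := by
              apply lsR_strict R w WW kk hmatch (by omega) (hARfam t') hV
              constructor
              · rw [← hspec]; exact Uset_mono R _ (by omega) _
              · intro hcon
                have heq : Uset R (WW m).w t' (kk m + 1) = V :=
                  le_antisymm (by rw [← hspec]; exact Uset_mono R _ (by omega) _) hcon
                have := minR_le R WW kk heq
                omega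
            exact IHN _ (by omega) t' m y' hmlt hy' (le_refl _)
        -- invariant propagates
        have hinv' : lsL R w WW kk m (prevV R WW kk m V) +
            lsR R w WW kk m (prevV R WW kk m V) ≤
            N + levIn (famM R w WW kk m) (prevV R WW kk m V) := by
          have hdec := lsR_succ R w WW kk hmlt (prevV R WW kk m V)
          have hsub : lsR R w WW kk (m + 1) (nextV R WW kk m (prevV R WW kk m V)) ≤
              lsR R w WW kk (m + 1) V := by
            apply lsR_mono R w WW kk hmatch (by omega) _ hV (galois_np R WW kk hVfam)
            rw [← famM_succ R w WW kk hmatch hmlt]; exact nextV_mem R WW kk _ _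
          omega
        obtain ⟨p', hp'len, hp'Z, hp'ev⟩ := ihm (by omega) _ hprevmem hinv' x' hx'prev
        refine ⟨p' ++ [(a', y')], by simp [hp'len], ?_, ?_⟩
        · intro i xx yy hi
          have hilt : i < m + 1 := by
            have := (List.getElem?_eq_some_iff.mp hi).1
            simpa [hp'len] using this
          rcases Nat.lt_or_ge i m with hlt2 | hge
          · rw [List.getElem?_append_left (by omega)] at hi
            exact hp'Z i xx yy hi
          · have him : i = m := by omega
            subst him
            have : (p' ++ [(a', y')])[i]? = some (a', y') := by
              rw [show i = p'.length from by omega]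
              exact List.getElem?_concat_length
            rw [this] at hi
            have : yy = y' := (Prod.mk.injEq _ _ _ _ |>.mp (Option.some.inj hi)).2.symm
            rw [this]
            exact hy'Z
        · rw [evalFrom_append, mem_evalFrom_exists]
          refine ⟨x', hp'ev, ?_⟩
          show x ∈ R.T.evalFrom (R.T.stepSet {x'} (a', y')) []
          simp only [NFA.evalFrom_nil, NFA.mem_stepSet]
          exact ⟨x', rfl, hstep'⟩
    -- suffix construction
    have buildR : ∀ (d m : ℕ), m + d = w.length → ∀ (V : Set QT), V ∈ famM R w WW kk m →
        lsL R w WW kk m V + lsR R w WW kk m V ≤ N + levIn (famM R w WW kk m) V →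
        ∀ x ∈ V, ∃ p : List (Sig × Sig), p.length = d ∧
          (∀ i xx yy, p[i]? = some (xx, yy) → yy ∈ Zset R w (m + i)) ∧
          (R.T.evalFrom {x} p ∩ R.T.accept).Nonempty := by
      intro d
      induction d with
      | zero =>
        intro m hmd V hV _ x hx
        have hm : m = w.length := by omega
        subst hm
        have hV' : V ∈ fam R (WW (w.length - 1)).w (kk (w.length - 1) + 1) := by
          rw [famM, if_neg (lt_irrefl _)] at hV
          exact hV
        exact ⟨[], rfl, by intro i xx yy h; simp at h,
          ⟨x, by simp, hacceptV V hV' hx⟩⟩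
      | succ d ihd =>
        intro m hmd V hV hinv x hx
        have hmlt : m < w.length := by omega
        have hVfam : V ∈ fam R (WW m).w (kk m) := by
          rw [← famM_of_lt R w WW kk hmlt]; exact hV
        have hspec : Uset R (WW m).w (minL R WW kk m V) (kk m) = V :=
          minL_spec R WW kk hVfam
        have hxU : x ∈ Uset R (WW m).w (minL R WW kk m V) (kk m) := by
          rw [hspec]; exact hx
        obtain ⟨a', y', x', hy', hstep', hx'B⟩ :=
          Bset_peel R (WW m).w hxU.2 (kk_lt R w WW kk hcol hmlt)
        have hx'F : x' ∈ Fset R (WW m).w (minL R WW kk m V) (kk m + 1) :=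
          Fset_extend R (WW m).w hxU.1 hy' hstep'
        have hx'next : x' ∈ nextV R WW kk m V := ⟨hx'F, hx'B⟩
        have hnextmem : nextV R WW kk m V ∈ famM R w WW kk (m + 1) := by
          rw [← famM_succ R w WW kk hmatch hmlt]; exact nextV_mem R WW kk m V
        have hARfam : ∀ t, Uset R (WW m).w t (kk m + 1) ∈ famM R w WW kk (m + 1) := by
          intro t; rw [← famM_succ R w WW kk hmatch hmlt]; exact ⟨t, rfl⟩
        have hALfam : ∀ t, Uset R (WW m).w t (kk m) ∈ famM R w WW kk m := by
          intro t; rw [famM_of_lt R w WW kk hmlt]; exact ⟨t, rfl⟩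
        -- key arithmetic: lsL m V + lsR (m+1) (nextV m V) ≤ N
        have hkey : lsL R w WW kk m V +
            lsR R w WW kk (m + 1) (nextV R WW kk m V) ≤ N := by
          have hdec := lsR_succ R w WW kk hmlt V
          omega
        have hy'Z : y' ∈ Zset R w m := by
          rcases Nat.eq_zero_or_pos (minL R WW kk m V) with h0 | hpos
          · rw [h0] at hy'
            exact mosaic_base R w WW kk hcol hmlt hy'
          · obtain ⟨t', ht'⟩ : ∃ t', minL R WW kk m V = t' + 1 :=
              ⟨minL R WW kk m V - 1, by omega⟩
            rw [ht'] at hy'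
            have h1 : lsL R w WW kk m (Uset R (WW m).w t' (kk m)) <
                lsL R w WW kk m V := by
              apply lsL_strict R w WW kk hmatch (by omega) (by omega) (hALfam t') hV
              constructor
              · rw [← hspec]; exact Uset_mono R _ (by omega) _
              · intro hcon
                have heq : Uset R (WW m).w t' (kk m) = V :=
                  le_antisymm (by rw [← hspec]; exact Uset_mono R _ (by omega) _) hcon
                have := minL_le R WW kk heq
                omega
            have h2 : lsR R w WW kk (m + 1) (Uset R (WW m).w t' (kk m + 1)) ≤
                lsR R w WW kk (m + 1) (nextV R WW kk m V) := by
              apply lsR_mono R w WW kk hmatch (by omega) (hARfam t') hnextmem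
              show Uset R (WW m).w t' (kk m + 1) ⊆
                Uset R (WW m).w (minL R WW kk m V) (kk m + 1)
              exact Uset_mono R _ (by omega) _
            exact IHN _ (by omega) t' m y' hmlt hy' (le_refl _)
        have hinv' : lsL R w WW kk (m + 1) (nextV R WW kk m V) +
            lsR R w WW kk (m + 1) (nextV R WW kk m V) ≤
            N + levIn (famM R w WW kk (m + 1)) (nextV R WW kk m V) := by
          have hdec := lsL_succ R w WW kk m (nextV R WW kk m V)
          have hsub : lsL R w WW kk m (prevV R WW kk m (nextV R WW kk m V)) ≤
              lsL R w WW kk m V := by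
            apply lsL_mono R w WW kk hmatch (by omega) (by omega) _ hV
              (galois_pn R WW kk hVfam)
            rw [famM_of_lt R w WW kk hmlt]; exact prevV_mem R WW kk _ _
          omega
        obtain ⟨p', hp'len, hp'Z, hp'ev⟩ := ihd (m + 1) (by omega) _ hnextmem hinv' x' hx'next
        refine ⟨(a', y') :: p', by simp [hp'len], ?_, ?_⟩
        · intro i xx yy hi
          cases i with
          | zero =>
            simp only [List.getElem?_cons_zero, Option.some.injEq, Prod.mk.injEq] at hi
            rw [Nat.add_zero, ← hi.2]
            exact hy'Z
          | succ i =>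
            simp only [List.getElem?_cons_succ] at hi
            have := hp'Z i xx yy hi
            have harith : m + (i + 1) = m + 1 + i := by omega
            rwa [harith]
        · obtain ⟨qf, hqf1, hqf2⟩ := hp'ev
          refine ⟨qf, ?_, hqf2⟩
          show qf ∈ R.T.evalFrom (R.T.stepSet {x} (a', y')) p'
          refine evalFrom_mono R.T ?_ p' hqf1
          intro z hz; cases hz
          rw [NFA.mem_stepSet]; exact ⟨x, rfl, hstep'⟩
    -- anchors and invariants
    have hALm : Uset R (WW c).w s (kk c) ∈ famM R w WW kk c := by
      rw [famM_of_lt R w WW kk hc]; exact ⟨s, rfl⟩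
    have hARm : Uset R (WW c).w s (kk c + 1) ∈ famM R w WW kk (c + 1) := by
      rw [← famM_succ R w WW kk hmatch hc]; exact ⟨s, rfl⟩
    have hnextmem : nextV R WW kk c (Uset R (WW c).w s (kk c)) ∈ famM R w WW kk (c + 1) := by
      rw [← famM_succ R w WW kk hmatch hc]; exact nextV_mem R WW kk _ _
    have hprevmem : prevV R WW kk c (Uset R (WW c).w s (kk c + 1)) ∈ famM R w WW kk c := by
      rw [famM_of_lt R w WW kk hc]; exact prevV_mem R WW kk _ _
    have hinvL : lsL R w WW kk c (Uset R (WW c).w s (kk c)) +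
        lsR R w WW kk c (Uset R (WW c).w s (kk c)) ≤
        N + levIn (famM R w WW kk c) (Uset R (WW c).w s (kk c)) := by
      have hdec := lsR_succ R w WW kk hc (Uset R (WW c).w s (kk c))
      have hsub : lsR R w WW kk (c + 1) (nextV R WW kk c (Uset R (WW c).w s (kk c))) ≤
          lsR R w WW kk (c + 1) (Uset R (WW c).w s (kk c + 1)) := by
        apply lsR_mono R w WW kk hmatch (by omega) hnextmem hARm
        show Uset R (WW c).w (minL R WW kk c (Uset R (WW c).w s (kk c))) (kk c + 1) ⊆ _
        exact Uset_mono R _ (minL_le R WW kk rfl) _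
      omega
    have hinvR : lsL R w WW kk (c + 1) (Uset R (WW c).w s (kk c + 1)) +
        lsR R w WW kk (c + 1) (Uset R (WW c).w s (kk c + 1)) ≤
        N + levIn (famM R w WW kk (c + 1)) (Uset R (WW c).w s (kk c + 1)) := by
      have hdec := lsL_succ R w WW kk c (Uset R (WW c).w s (kk c + 1))
      have hsub : lsL R w WW kk c (prevV R WW kk c (Uset R (WW c).w s (kk c + 1))) ≤
          lsL R w WW kk c (Uset R (WW c).w s (kk c)) := by
        apply lsL_mono R w WW kk hmatch (by omega) (by omega) hprevmem hALm
        show Uset R (WW c).w (minR R WW kk c (Uset R (WW c).w s (kk c + 1))) (kk c) ⊆ _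
        exact Uset_mono R _ (minR_le R WW kk rfl) _
      omega
    obtain ⟨pL, hpLlen, hpLZ, hpLev⟩ :=
      buildL c (le_refl c) _ hALm hinvL q hqU
    obtain ⟨pR, hpRlen, hpRZ, hpRev⟩ :=
      buildR (w.length - (c + 1)) (c + 1) (by omega) _ hARm hinvR q' hq'U
    -- glue
    have hplen : (pL ++ (b, y) :: pR).length = w.length := by
      simp [hpLlen, hpRlen]; omega
    have hpacc : (pL ++ (b, y) :: pR) ∈ R.T.accepts := by
      obtain ⟨qf, hqf1, hqf2⟩ := hpRev
      rw [NFA.mem_accepts]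
      refine ⟨qf, hqf2, ?_⟩
      show qf ∈ R.T.evalFrom R.T.start (pL ++ (b, y) :: pR)
      rw [evalFrom_append, mem_evalFrom_exists]
      refine ⟨q, hpLev, ?_⟩
      show qf ∈ R.T.evalFrom (R.T.stepSet {q} (b, y)) pR
      refine evalFrom_mono R.T ?_ pR hqf1
      intro z hz; cases hz
      rw [NFA.mem_stepSet]; exact ⟨q, rfl, hstep⟩
    have hpZ : ∀ i xx yy, (pL ++ (b, y) :: pR)[i]? = some (xx, yy) → yy ∈ Zset R w i := by
      intro i xx yy hi
      rcases Nat.lt_or_ge i c with h | h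
      · rw [List.getElem?_append_left (by omega)] at hi
        exact hpLZ i xx yy hi
      · rw [List.getElem?_append_right (by omega)] at hi
        rcases Nat.eq_or_lt_of_le h with h' | h'
        · subst h'
          rw [hpLlen, Nat.sub_self] at hi
          simp only [List.getElem?_cons_zero, Option.some.injEq, Prod.mk.injEq] at hi
          rw [← hi.2]
          exact hyZ
        · have harith : i - pL.length = (i - c - 1) + 1 := by omega
          rw [harith, List.getElem?_cons_succ] at hi
          have := hpRZ (i - c - 1) xx yy hi
          have harith2 : c + 1 + (i - c - 1) = i := by omega
          rwa [harith2] at this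
    obtain ⟨T, hT⟩ := pvalid_of_Z R w (pL ++ (b, y) :: pR) 0
      (fun m xx yy hm => by simpa using hpZ m xx yy hm)
    refine ⟨T + 1, ?_⟩
    rw [Psi_succ]
    right
    refine ⟨pL ++ (b, y) :: pR, hplen, hpacc, hT, y, ?_⟩
    rw [List.getElem?_append_right (by omega), hpLlen, Nat.sub_self]
    simp

include hmatch hcol hstartV hacceptV in
theorem mosaic_cols {c : ℕ} (hc : c < w.length) {b : Sig}
    (hb : b ∈ Zset R (WW c).w (kk c)) : b ∈ Zset R w c := by
  obtain ⟨s, hs⟩ := hb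
  cases s with
  | zero => exact mosaic_base R w WW kk hcol hc hs
  | succ s' =>
    exact mosaic_main R w WW kk hmatch hcol hstartV hacceptV _ s' c b hc hs (le_refl _)

end Mosaic

section Soundness

variable [Fintype QT]

theorem fam_zero_subset (w' : List Sig) : ∀ V ∈ fam R w' 0, V ⊆ R.T.start := by
  rintro V ⟨s, rfl⟩ q hq
  exact Fset_zero_subset R w' s hq.1

theorem fam_final_subset (w' : List Sig) : ∀ V ∈ fam R w' w'.length, V ⊆ R.T.accept := by
  rintro V ⟨s, rfl⟩ q hq
  exact Bset_final_subset R w' s hq.2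

theorem fam_eq_of_summ_parts {w1 w2 : List Sig} {c1 c2 : ℕ}
    (h1 : capRank R w1 c1 = capRank R w2 c2) (h2 : capCard R w1 c1 = capCard R w2 c2) :
    fam R w1 c1 = fam R w2 c2 := by
  have hr : rankf R w1 c1 = rankf R w2 c2 :=
    funext fun q => congrArg Fin.val (congrFun h1 q)
  have hcc : famCard R w1 c1 = famCard R w2 c2 := congrArg Fin.val h2
  exact Set.Subset.antisymm (fam_eq_of_rank_eq R hr hcc) (fam_eq_of_rank_eq R hr.symm hcc.symm)

theorem summ_fst {W : Wit R} {c : ℕ} : (summ R W c).1 = capRank R W.w c := rfl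
theorem summ_snd1 {W : Wit R} {c : ℕ} : (summ R W c).2.1 = capCard R W.w c := rfl
theorem summ_snd2 {W : Wit R} {c : ℕ} : (summ R W c).2.2 = W.ir c := rfl

theorem fam_eq_of_summ_eq {W1 W2 : Wit R} {c1 c2 : ℕ} (h : summ R W1 c1 = summ R W2 c2) :
    fam R W1.w c1 = fam R W2.w c2 :=
  fam_eq_of_summ_parts R (congrArg Prod.fst h) (congrArg (fun p => p.2.1) h)

theorem soundness {w : List Sig} (hw : w ∈ (autA R).accepts) : w ∈ Ind1 R := by
  classical
  rw [NFA.mem_accepts] at hw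
  obtain ⟨pf, hpf, hpfe⟩ := hw
  obtain ⟨g, hg0, hglen, hgstep⟩ := exists_run (autA R) w (autA R).start pf hpfe
  obtain ⟨Ws, hWs⟩ := hg0
  have haccmem : g w.length ∈ (autA R).accept := by rw [hglen]; exact hpf
  obtain ⟨Wf, hWf⟩ := haccmem
  rcases Nat.eq_zero_or_pos w.length with hlen0 | hlen0
  · -- empty word
    have hwnil : w = [] := List.length_eq_zero_iff.mp hlen0
    subst hwnil
    have heq : summ R Ws 0 = summ R Wf Wf.w.length := by
      rw [← hWs, ← hWf]
      rfl
    have hirs : Ws.ir 0 = Wf.ir Wf.w.length := congrArg (fun p => p.2.2) heq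
    refine ⟨[], ?_, fun φ _ h => h⟩
    rw [NFA.mem_accepts]
    exact ⟨Ws.ir 0, by rw [hirs]; exact Wf.haccept, Ws.hstart⟩
  · -- nonempty word: build the mosaic
    have hstepdata : ∀ c, c < w.length → ∃ (W : Wit R) (k : ℕ), (k < W.w.length ∧
        W.w[k]? = w[c]?) ∧ g c = summ R W k ∧ g (c + 1) = summ R W (k + 1) := by
      intro c hc
      have hmem := hgstep c (w[c]'hc) (List.getElem?_eq_some_iff.mpr ⟨hc, rfl⟩)
      obtain ⟨W, k, hk, hkw, h1, h2⟩ := hmem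
      refine ⟨W, k, ⟨hk, ?_⟩, h1, h2⟩
      rw [hkw]
      exact (List.getElem?_eq_some_iff.mpr ⟨hc, rfl⟩).symm
    choose Wfn kfn hside hsum1 hsum2 using hstepdata
    set WW : ℕ → Wit R := fun c => if hc : c < w.length then Wfn c hc else Ws with hWW
    set kk : ℕ → ℕ := fun c => if hc : c < w.length then kfn c hc else 0 with hkk
    have hWWc : ∀ c (hc : c < w.length), WW c = Wfn c hc := by
      intro c hc; simp [hWW, dif_pos hc]
    have hkkc : ∀ c (hc : c < w.length), kk c = kfn c hc := by
      intro c hc; simp [hkk, dif_pos hc]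
    have hsumA : ∀ c (hc : c < w.length), g c = summ R (WW c) (kk c) := by
      intro c hc; rw [hWWc c hc, hkkc c hc]; exact (hsum1 c hc)
    have hsumB : ∀ c (hc : c < w.length), g (c + 1) = summ R (WW c) (kk c + 1) := by
      intro c hc; rw [hWWc c hc, hkkc c hc]; exact (hsum2 c hc)
    have hcol : ∀ c (h : c < w.length), (WW c).w[kk c]? = some (w[c]'h) := by
      intro c h
      rw [hWWc c h, hkkc c h, (hside c h).2]
      exact List.getElem?_eq_some_iff.mpr ⟨h, rfl⟩
    have hmatch : ∀ c, c + 1 < w.length →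
        fam R (WW c).w (kk c + 1) = fam R (WW (c + 1)).w (kk (c + 1)) := by
      intro c hc
      have e1 := hsumB c (by omega)
      have e2 := hsumA (c + 1) hc
      exact fam_eq_of_summ_eq R (e1.symm.trans e2)
    have hstartV : ∀ V ∈ fam R (WW 0).w (kk 0), V ⊆ R.T.start := by
      have e1 := hsumA 0 hlen0
      have heq : fam R (WW 0).w (kk 0) = fam R Ws.w 0 :=
        fam_eq_of_summ_eq R (e1.symm.trans hWs)
      rw [heq]
      exact fam_zero_subset R Ws.w
    have hacceptV : ∀ V ∈ fam R (WW (w.length - 1)).w (kk (w.length - 1) + 1),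
        V ⊆ R.T.accept := by
      have e1 := hsumB (w.length - 1) (by omega)
      have e2 : (w.length - 1) + 1 = w.length := by omega
      rw [e2] at e1
      have heq : fam R (WW (w.length - 1)).w (kk (w.length - 1) + 1) =
          fam R Wf.w Wf.w.length :=
        fam_eq_of_summ_eq R (e1.symm.trans hWf)
      rw [heq]
      exact fam_final_subset R Wf.w
    -- the mosaic initial word
    have hulen : ∀ (c : Fin w.length), kk c.1 < (WW c.1).u.length := by
      intro c
      rw [(WW c.1).hlen]
      exact (List.getElem?_eq_some_iff.mp (hcol c.1 c.2)).1
    set u : List Sig := List.ofFn (fun c : Fin w.length => (WW c.1).u[kk c.1]'(hulen c))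
      with hu
    have hulen' : u.length = w.length := by simp [hu]
    have hugetl : ∀ (c : ℕ) (hc : c < w.length),
        u[c]'(by omega) = (WW c).u[kk c]'(hulen ⟨c, hc⟩) := by
      intro c hc
      simp [hu]
    -- u is accepted by I
    have hrun : ∀ c, c ≤ w.length →
        (g c).2.2 ∈ R.I.evalFrom R.I.start (u.take c) := by
      intro c
      induction c with
      | zero =>
        intro _
        rw [List.take_zero]
        show (g 0).2.2 ∈ R.I.start
        rw [hWs]
        exact Ws.hstart
      | succ c ih =>
        intro hc
        have hclt : c < w.length := by omega
        have htake : u.take (c + 1) = u.take c ++ [u[c]'(by omega)] := by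
          rw [List.take_succ]
          congr 1
          rw [(List.getElem?_eq_some_iff).mpr ⟨by omega, rfl⟩]
          rfl
        rw [htake, NFA.evalFrom_append, NFA.evalFrom_singleton, NFA.mem_stepSet]
        refine ⟨(g c).2.2, ih (by omega), ?_⟩
        have e1 : (g c).2.2 = (WW c).ir (kk c) := by rw [hsumA c hclt]; rfl
        have e2 : (g (c + 1)).2.2 = (WW c).ir (kk c + 1) := by rw [hsumB c hclt]; rfl
        rw [e1, e2, hugetl c hclt]
        exact (WW c).hstep (kk c) _ (List.getElem?_eq_some_iff.mpr ⟨hulen ⟨c, hclt⟩, rfl⟩)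
    have huacc : u ∈ R.I.accepts := by
      rw [NFA.mem_accepts]
      refine ⟨(g w.length).2.2, ?_, ?_⟩
      · rw [hWf]
        exact Wf.haccept
      · have := hrun w.length (le_refl _)
        rwa [show u.take w.length = u from by rw [← hulen']; exact List.take_length (l := u)] at this
    -- coverage
    have hcov : ∀ j x, u[j]? = some x → x ∈ Zset R w j := by
      intro j x hx
      have hjlt : j < w.length := by
        have := (List.getElem?_eq_some_iff.mp hx).1
        omega
      have hxval : x = (WW j).u[kk j]'(hulen ⟨j, hjlt⟩) := by
        have := (List.getElem?_eq_some_iff.mp hx).2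
        rw [← this, hugetl j hjlt]
      have hZ : x ∈ Zset R (WW j).w (kk j) := by
        apply (WW j).hcover (kk j) x
        rw [hxval]
        exact List.getElem?_eq_some_iff.mpr ⟨hulen ⟨j, hjlt⟩, rfl⟩
      exact mosaic_cols R w WW kk hmatch hcol hstartV hacceptV hjlt hZ
    exact ⟨u, huacc, (potReach1_iff R u w).mpr ⟨hulen', hcov⟩⟩

end Soundness

end Ind1NFA

/-- Theorem `thm:autforInd1`: there is an NFA over `Σ` with at
most `(n_T + 1)^(n_T) · 2^(n_T) · 2^(n_T) · 2 · n_I` states recognizing exactly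
`Ind_1(R)`. -/
theorem nfa_for_Ind1
    {Sig QI QT : Type} [Fintype Sig] [Fintype QI] [Fintype QT]
    (R : RTS Sig QI QT) :
    ∃ (Q : Type) (_ : Fintype Q) (A : NFA Sig Q),
      Fintype.card Q ≤
        (Fintype.card QT + 1) ^ (Fintype.card QT) * 2 ^ (Fintype.card QT) *
          2 ^ (Fintype.card QT) * 2 * Fintype.card QI ∧
      A.accepts = Ind1 R := by
  classical
  refine ⟨(QT → Fin (Fintype.card QT + 2)) × Fin (Fintype.card QT + 2) × QI,
    inferInstance, Ind1NFA.autA R, ?_, ?_⟩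
  · rw [Fintype.card_prod, Fintype.card_prod, Fintype.card_fun, Fintype.card_fin]
    set n := Fintype.card QT with hn
    have h1 : (n + 2) ^ n ≤ (n + 1) ^ n * 2 ^ n := by
      calc (n + 2) ^ n ≤ ((n + 1) * 2) ^ n := Nat.pow_le_pow_left (by omega) n
        _ = (n + 1) ^ n * 2 ^ n := Nat.mul_pow _ _ _
    have h2 : n + 2 ≤ 2 ^ n * 2 := by
      have hlt : n + 1 < 2 ^ (n + 1) := Nat.lt_two_pow_self
      have hp : 2 ^ (n + 1) = 2 ^ n * 2 := by rw [pow_succ]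
      omega
    calc (n + 2) ^ n * ((n + 2) * Fintype.card QI)
        ≤ ((n + 1) ^ n * 2 ^ n) * ((2 ^ n * 2) * Fintype.card QI) :=
          Nat.mul_le_mul h1 (Nat.mul_le_mul h2 (le_refl _))
      _ = (n + 1) ^ n * 2 ^ n * 2 ^ n * 2 * Fintype.card QI := by ring
  · apply Set.ext
    intro w
    exact ⟨Ind1NFA.soundness R, Ind1NFA.completeness R⟩
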